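/- Assume the deletion scenario. Let q, p ∈ ℝ² with q ≠ p, q ∉ T, p ∉ T, and suppose p and q are mutually visible with respect to E (the obstacle set after the deletion of v). Then p and q are mutually visible with respect to E₁ = (E \ {[vᵢ, vᵢ₊₁]}) ∪ {[v, vᵢ], [v, vᵢ₊₁]} (the obstacle set before the deletion) if and only if openSegment ℝ q p is disjoint from T. (This is the correctness claim of Section 3.2 of the paper for the update of the visibility polygon: a point becomes newly visible from q upon deleting the vertex v exactly when it is visible afterwards and its open segment to q intersects the triangle v vᵢ vᵢ₊₁.) -/

import Mathlib

open Set

/-- Points of the plane. -/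
abbrev Pt := EuclideanSpace ℝ (Fin 2)

/-- `x` is an endpoint of the (nondegenerate) closed segment `s`. -/
def IsSegEndpoint (x : Pt) (s : Set Pt) : Prop :=
  ∃ a b : Pt, a ≠ b ∧ s = segment ℝ a b ∧ (x = a ∨ x = b)

/-- An obstacle set: a finite set of nondegenerate closed segments such that any two
distinct segments intersect at most in a point that is a common endpoint of both. -/
def IsObstacleSet (E : Set (Set Pt)) : Prop :=
  E.Finite ∧
  (∀ s ∈ E, ∃ a b : Pt, a ≠ b ∧ s = segment ℝ a b) ∧
  (∀ s ∈ E, ∀ t ∈ E, s ≠ t → ∀ x ∈ s ∩ t, IsSegEndpoint x s ∧ IsSegEndpoint x t)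

/-- `V(E)`: the set of all endpoints of segments of `E`. -/
def Vset (E : Set (Set Pt)) : Set Pt := {x | ∃ s ∈ E, IsSegEndpoint x s}

/-- Two points `p ≠ q` are mutually visible with respect to `E` if the open segment
joining them is disjoint from every segment of `E`. -/
def MutuallyVisible (E : Set (Set Pt)) (p q : Pt) : Prop :=
  p ≠ q ∧ ∀ s ∈ E, openSegment ℝ p q ∩ s = ∅

/-- The cone at `q` spanned by `a` and `b`. -/
def Cone (q a b : Pt) : Set Pt :=
  {x | ∃ s t : ℝ, 0 ≤ s ∧ 0 ≤ t ∧ x = q + s • (a - q) + t • (b - q)}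

/-- The topological boundary of a triangle is contained in the union of its edges. -/
lemma tri_frontier (v vi vi1 : Pt) (hind : AffineIndependent ℝ ![v, vi, vi1]) :
    convexHull ℝ ({v, vi, vi1} : Set Pt) \ interior (convexHull ℝ ({v, vi, vi1} : Set Pt)) ⊆
      segment ℝ vi vi1 ∪ segment ℝ v vi ∪ segment ℝ v vi1 := by
  have hspan : affineSpan ℝ (Set.range ![v, vi, vi1]) = ⊤ := by
    rw [hind.affineSpan_eq_top_iff_card_eq_finrank_add_one]
    simp [finrank_euclideanSpace]
  let b : AffineBasis (Fin 3) ℝ Pt := ⟨![v, vi, vi1], hind, hspan⟩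
  have hrange : Set.range b = ({v, vi, vi1} : Set Pt) := by
    show Set.range ![v, vi, vi1] = _
    ext x
    simp [Matrix.range_cons, Matrix.range_empty]
    tauto
  intro x hx
  obtain ⟨h1, h2⟩ := hx
  rw [← hrange, b.convexHull_eq_nonneg_coord] at h1
  rw [← hrange, b.interior_convexHull] at h2
  have hnn : ∀ i, 0 ≤ b.coord i x := h1
  simp only [Set.mem_setOf_eq, not_forall, not_lt] at h2
  obtain ⟨i, hi⟩ := h2
  have hi0 : b.coord i x = 0 := le_antisymm hi (hnn i)
  have hsum : ∑ j, b.coord j x = 1 := b.sum_coord_apply_eq_one x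
  rw [Fin.sum_univ_three] at hsum
  have hx' : ∑ j, b.coord j x • b j = x := b.linear_combination_coord_eq_self x
  rw [Fin.sum_univ_three] at hx'
  have hb0 : b 0 = v := rfl
  have hb1 : b 1 = vi := rfl
  have hb2 : b 2 = vi1 := rfl
  rw [hb0, hb1, hb2] at hx'
  fin_cases i
  · have h0 : b.coord 0 x = 0 := hi0
    left; left
    refine ⟨b.coord 1 x, b.coord 2 x, hnn 1, hnn 2, by linarith, ?_⟩
    conv_rhs => rw [← hx']
    rw [h0]; simp
  · have h0 : b.coord 1 x = 0 := hi0
    right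
    refine ⟨b.coord 0 x, b.coord 2 x, hnn 0, hnn 2, by linarith, ?_⟩
    conv_rhs => rw [← hx']
    rw [h0]; simp
  · have h0 : b.coord 2 x = 0 := hi0
    left; right
    refine ⟨b.coord 0 x, b.coord 1 x, hnn 0, hnn 1, by linarith, ?_⟩
    conv_rhs => rw [← hx']
    rw [h0]; simp

/-- A point of `[x, p]` other than `p`, where `x` lies in the open segment `(q, p)`,
also lies in the open segment `(q, p)`. -/
lemma mem_openSegment_trans {q p x y : Pt} (hx : x ∈ openSegment ℝ q p)
    (hy : y ∈ segment ℝ x p) (hyp : y ≠ p) : y ∈ openSegment ℝ q p := by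
  obtain ⟨a, b, ha, hb, hab, hxe⟩ := hx
  obtain ⟨c, d, hc, hd, hcd, hye⟩ := hy
  have hc0 : 0 < c := by
    rcases hc.lt_or_eq with h | h
    · exact h
    · exfalso; apply hyp; rw [← hye, ← h]
      have hd1 : d = 1 := by linarith
      rw [hd1]; simp
  refine ⟨c * a, c * b + d, by positivity, ?_, by ring_nf; nlinarith, ?_⟩
  · have : 0 < c * b := by positivity
    linarith
  · rw [← hye, ← hxe]
    module

/-- Crossing lemma: a segment from an interior point of a closed set to an exterior
point meets the boundary. -/
lemma exists_frontier_pt {T : Set Pt} (hT : IsClosed T) {x p : Pt}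
    (hx : x ∈ interior T) (hp : p ∉ T) :
    ∃ y ∈ segment ℝ x p, y ∈ T \ interior T := by
  by_contra h
  push_neg at h
  have hpc : IsPreconnected (segment ℝ x p) := (convex_segment x p).isPreconnected
  have := hpc (interior T) Tᶜ isOpen_interior hT.isOpen_compl
    (fun y hy => by
      by_cases hyT : y ∈ T
      · left; by_contra hint; exact h y hy ⟨hyT, hint⟩
      · right; exact hyT)
    ⟨x, left_mem_segment ℝ x p, hx⟩ ⟨p, right_mem_segment ℝ x p, hp⟩
  obtain ⟨z, _, hz1, hz2⟩ := this
  exact hz2 (interior_subset hz1)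

theorem stmt_10
    (E : Set (Set Pt)) (v vi vi1 : Pt)
    (hind : AffineIndependent ℝ ![v, vi, vi1])
    (hE : IsObstacleSet E)
    (hbase : segment ℝ vi vi1 ∈ E)
    (hT : convexHull ℝ ({v, vi, vi1} : Set Pt) ∩ ⋃₀ E = segment ℝ vi vi1)
    (q p : Pt) (hqp : q ≠ p)
    (hq : q ∉ convexHull ℝ ({v, vi, vi1} : Set Pt))
    (hp : p ∉ convexHull ℝ ({v, vi, vi1} : Set Pt))
    (hvis : MutuallyVisible E p q) :
    MutuallyVisible ((E \ {segment ℝ vi vi1}) ∪ {segment ℝ v vi, segment ℝ v vi1}) p q ↔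
      openSegment ℝ q p ∩ convexHull ℝ ({v, vi, vi1} : Set Pt) = ∅ := by
  obtain ⟨hpq, hvisE⟩ := hvis
  set T := convexHull ℝ ({v, vi, vi1} : Set Pt) with hTdef
  have hTclosed : IsClosed T :=
    (Set.Finite.isCompact_convexHull (𝕜 := ℝ) (by simp)).isClosed
  have hsub1 : segment ℝ v vi ⊆ T :=
    (convex_convexHull ℝ _).segment_subset
      (subset_convexHull ℝ _ (by simp)) (subset_convexHull ℝ _ (by simp))
  have hsub2 : segment ℝ v vi1 ⊆ T :=
    (convex_convexHull ℝ _).segment_subset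
      (subset_convexHull ℝ _ (by simp)) (subset_convexHull ℝ _ (by simp))
  have hbase_dis : openSegment ℝ p q ∩ segment ℝ vi vi1 = ∅ := hvisE _ hbase
  constructor
  · rintro ⟨-, hvis1⟩
    have hside1 : openSegment ℝ p q ∩ segment ℝ v vi = ∅ :=
      hvis1 _ (Or.inr (by simp))
    have hside2 : openSegment ℝ p q ∩ segment ℝ v vi1 = ∅ :=
      hvis1 _ (Or.inr (by simp))
    have hedge : ∀ y, y ∈ openSegment ℝ q p → y ∈ T \ interior T → False := by
      intro y hy hyf
      have hy' : y ∈ openSegment ℝ p q := by rwa [openSegment_symm] at hy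
      rcases tri_frontier v vi vi1 hind hyf with (h | h) | h
      · exact absurd (mem_inter hy' h) (by rw [hbase_dis]; exact notMem_empty y)
      · exact absurd (mem_inter hy' h) (by rw [hside1]; exact notMem_empty y)
      · exact absurd (mem_inter hy' h) (by rw [hside2]; exact notMem_empty y)
    rw [eq_empty_iff_forall_notMem]
    rintro x ⟨hxseg, hxT⟩
    have hxint : x ∈ interior T := by
      by_contra h
      exact hedge x hxseg ⟨hxT, h⟩
    obtain ⟨y, hyseg, hyf⟩ := exists_frontier_pt hTclosed hxint hp
    have hynep : y ≠ p := fun h => hp (h ▸ hyf.1)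
    exact hedge y (mem_openSegment_trans hxseg hyseg hynep) hyf
  · intro hdis
    refine ⟨hpq, ?_⟩
    have hdis' : openSegment ℝ p q ∩ T = ∅ := by rwa [openSegment_symm] at hdis
    intro s hs
    rcases hs with ⟨hsE, -⟩ | hs
    · exact hvisE s hsE
    · rcases hs with h | h
      · subst h
        exact eq_empty_of_subset_empty
          (hdis' ▸ inter_subset_inter_right _ hsub1)
      · simp only [mem_singleton_iff] at h
        subst h
        exact eq_empty_of_subset_empty
          (hdis' ▸ inter_subset_inter_right _ hsub2)
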